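/- Policy gradient identity: if π_θ is a stationary distribution of p_θ (i.e., ∑_s π_θ(s) p_θ(s,s') = π_θ(s') and ∑_s π_θ(s) = 1), the differential reward d satisfies the Bellman equation d(s) = T_θ(s) − ξ(θ) + ∑_{s'} p_θ(s,s') d(s') with ξ(θ) = ∑_s π_θ(s) T_θ(s), and all quantities are differentiable in θ, then ∂ξ/∂θ = ∑_s π_θ(s) ( ∂T_θ(s)/∂θ + ∑_{s'} ∂p_θ(s,s')/∂θ · d(s') ). -/

import Mathlib

/-- Policy gradient identity: if `π_θ` is a stationary probability vector of
the differentiable family of stochastic matrices `p_θ`, the differential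
reward `d_θ` solves the Bellman equation
`d_θ(s) = T_θ(s) - ξ(θ) + ∑_{s'} p_θ(s,s') d_θ(s')` with
`ξ(θ) = ∑_s π_θ(s) T_θ(s)`, then
`ξ'(θ) = ∑_s π_θ(s) (T_θ'(s) + ∑_{s'} p_θ'(s,s') d_θ(s'))`. -/
theorem stmt_11 {S : Type*} [Fintype S]
    (p : ℝ → S → S → ℝ) (T : ℝ → S → ℝ) (π : ℝ → S → ℝ) (d : ℝ → S → ℝ)
    (hpnonneg : ∀ θ s s', 0 ≤ p θ s s')
    (hprow : ∀ θ s, ∑ s' : S, p θ s s' = 1)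
    (hpdiff : ∀ s s', Differentiable ℝ (fun θ => p θ s s'))
    (hTdiff : ∀ s, Differentiable ℝ (fun θ => T θ s))
    (hπdiff : ∀ s, Differentiable ℝ (fun θ => π θ s))
    (hddiff : ∀ s, Differentiable ℝ (fun θ => d θ s))
    (hπnonneg : ∀ θ s, 0 ≤ π θ s)
    (hπsum : ∀ θ, ∑ s : S, π θ s = 1)
    (hstat : ∀ θ s', ∑ s : S, π θ s * p θ s s' = π θ s')
    (ξ : ℝ → ℝ) (hξ : ξ = fun θ => ∑ s : S, π θ s * T θ s)
    (hBellman : ∀ θ s, d θ s = T θ s - ξ θ + ∑ s' : S, p θ s s' * d θ s') :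
    ∀ θ : ℝ, deriv ξ θ =
      ∑ s : S, π θ s *
        (deriv (fun θ' => T θ' s) θ +
          ∑ s' : S, deriv (fun θ' => p θ' s s') θ * d θ s') := by
  intro θ
  have hξdiff : Differentiable ℝ ξ := by
    rw [hξ]
    exact Differentiable.fun_sum fun s _ => (hπdiff s).mul (hTdiff s)
  set X := deriv ξ θ with hX
  set Tp : S → ℝ := fun s => deriv (fun θ' => T θ' s) θ with hTp
  set Pp : S → S → ℝ := fun s s' => deriv (fun θ' => p θ' s s') θ with hPp
  set D : S → ℝ := fun s => deriv (fun θ' => d θ' s) θ with hD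
  have hDs : ∀ s, D s = Tp s - X + ∑ s' : S, (Pp s s' * d θ s' + p θ s s' * D s') := by
    intro s
    have h1 : HasDerivAt (fun θ' => T θ' s - ξ θ' + ∑ s' : S, p θ' s s' * d θ' s')
        (Tp s - X + ∑ s' : S, (Pp s s' * d θ s' + p θ s s' * D s')) θ := by
      refine HasDerivAt.add (HasDerivAt.sub ?_ ?_) (HasDerivAt.fun_sum fun s' _ => ?_)
      · exact ((hTdiff s θ).hasDerivAt)
      · exact (hξdiff θ).hasDerivAt
      · exact ((hpdiff s s' θ).hasDerivAt).mul ((hddiff s' θ).hasDerivAt)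
    have h2 : (fun θ' => d θ' s) = fun θ' => T θ' s - ξ θ' + ∑ s' : S, p θ' s s' * d θ' s' :=
      funext fun θ' => hBellman θ' s
    have := h1.deriv
    rw [← h2] at this
    exact this
  have hsum : ∑ s : S, π θ s * D s =
      (∑ s : S, π θ s * Tp s) - X + (∑ s : S, π θ s * ∑ s' : S, Pp s s' * d θ s')
        + (∑ s : S, π θ s * D s) := by
    calc ∑ s : S, π θ s * D s
        = ∑ s : S, (π θ s * Tp s - π θ s * X
            + (π θ s * ∑ s' : S, Pp s s' * d θ s' + π θ s * ∑ s' : S, p θ s s' * D s')) := by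
          refine Finset.sum_congr rfl fun s _ => ?_
          rw [hDs s, Finset.sum_add_distrib]; ring
      _ = (∑ s : S, π θ s * Tp s) - (∑ s : S, π θ s * X)
            + ((∑ s : S, π θ s * ∑ s' : S, Pp s s' * d θ s')
              + ∑ s : S, π θ s * ∑ s' : S, p θ s s' * D s') := by
          rw [Finset.sum_add_distrib, Finset.sum_sub_distrib, Finset.sum_add_distrib]
      _ = (∑ s : S, π θ s * Tp s) - X + ((∑ s : S, π θ s * ∑ s' : S, Pp s s' * d θ s')
              + ∑ s : S, π θ s * D s) := by
        congr 1
        · congr 1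
          rw [← Finset.sum_mul, hπsum, one_mul]
        · congr 1
          calc ∑ s : S, π θ s * ∑ s' : S, p θ s s' * D s'
              = ∑ s : S, ∑ s' : S, π θ s * p θ s s' * D s' := by
                refine Finset.sum_congr rfl fun s _ => ?_
                rw [Finset.mul_sum]; exact Finset.sum_congr rfl fun s' _ => by ring
            _ = ∑ s' : S, (∑ s : S, π θ s * p θ s s') * D s' := by
                rw [Finset.sum_comm]
                exact Finset.sum_congr rfl fun s' _ => by rw [Finset.sum_mul]
            _ = ∑ s' : S, π θ s' * D s' := by
                exact Finset.sum_congr rfl fun s' _ => by rw [hstat]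
      _ = _ := by ring
  have hXeq : X = (∑ s : S, π θ s * Tp s) + ∑ s : S, π θ s * ∑ s' : S, Pp s s' * d θ s' := by
    linarith [hsum]
  rw [hXeq]
  rw [← Finset.sum_add_distrib]
  exact Finset.sum_congr rfl fun s _ => by rw [mul_add]
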